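/- arXiv:1304.5975 — 2 statements merged into one kernel-verified Lean document; each statement's English description precedes it below -/
import Mathlib

section
/- Let f be differentiable on an interval containing [u,v], u < v, f' integrable, and |f'|^r convex on [u,v] with p, r > 1, 1/p + 1/r = 1. Then |(1/6)[f(u) + f(v) + 4 f((u+v)/2)] - (1/(v-u)) ∫ᵤᵛ f(x) dx| ≤ ((v-u)/4^(1+1/r)) ((1+2^(p+1))/(3^(p+1)(p+1)))^(1/p) · [(3|f'(u)|^r + |f'(v)|^r)^(1/r) + (|f'(u)|^r + 3|f'(v)|^r)^(1/r)]. -/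
open MeasureTheory intervalIntegral

lemma kernel_int {q : ℝ} (hq : 0 ≤ q) {a c b : ℝ} (hac : a ≤ c) (hcb : c ≤ b) :
    ∫ x in a..b, |x - c| ^ q = ((c - a) ^ (q + 1) + (b - c) ^ (q + 1)) / (q + 1) := by
  have hcont : Continuous fun x : ℝ => |x - c| ^ q :=
    (continuous_id.sub continuous_const).abs.rpow_const (fun x => Or.inr hq)
  have hq1 : q + 1 ≠ 0 := by linarith
  rw [← intervalIntegral.integral_add_adjacent_intervals
      (hcont.intervalIntegrable a c) (hcont.intervalIntegrable c b)]
  have h1 : ∫ x in a..c, |x - c| ^ q = (c - a) ^ (q + 1) / (q + 1) := by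
    have : ∫ x in a..c, |x - c| ^ q = ∫ x in a..c, (c - x) ^ q := by
      apply intervalIntegral.integral_congr
      intro x hx
      rw [Set.uIcc_of_le hac] at hx
      simp only []
      rw [abs_of_nonpos (by linarith [hx.2]), neg_sub]
    rw [this, intervalIntegral.integral_comp_sub_left (fun y => y ^ q) c, sub_self]
    rw [integral_rpow (Or.inl (by linarith))]
    rw [Real.zero_rpow hq1]
    ring
  have h2 : ∫ x in c..b, |x - c| ^ q = (b - c) ^ (q + 1) / (q + 1) := by
    have : ∫ x in c..b, |x - c| ^ q = ∫ x in c..b, (x - c) ^ q := by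
      apply intervalIntegral.integral_congr
      intro x hx
      rw [Set.uIcc_of_le hcb] at hx
      simp only []
      rw [abs_of_nonneg (by linarith [hx.1])]
    rw [this, intervalIntegral.integral_comp_sub_right (fun y => y ^ q) c, sub_self]
    rw [integral_rpow (Or.inl (by linarith))]
    rw [Real.zero_rpow hq1]
    ring
  rw [h1, h2]; ring

lemma const_id {p r h : ℝ} (hp : 1 < p) (hr : 1 < r) (hpr : 1 / p + 1 / r = 1) (hh : 0 < h) :
    (((h / 6) ^ (p + 1) + (h / 3) ^ (p + 1)) / (p + 1)) ^ (1 / p) * (h / 8) ^ (1 / r) / h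
      = h / 4 ^ (1 + 1 / r) * ((1 + 2 ^ (p + 1)) / (3 ^ (p + 1) * (p + 1))) ^ (1 / p) := by
  have hp0 : (0:ℝ) < p := by linarith
  have hr0 : (0:ℝ) < r := by linarith
  have hp1 : (0:ℝ) < p + 1 := by linarith
  have h2p : (0:ℝ) < 2 ^ (p + 1) := Real.rpow_pos_of_pos two_pos _
  have hT : (0:ℝ) < 1 + 2 ^ (p + 1) := by linarith
  have hK' : (h / 3) ^ (p + 1) = (h / 6) ^ (p + 1) * 2 ^ (p + 1) := by
    rw [← Real.mul_rpow (by positivity : (0:ℝ) ≤ h / 6) (by norm_num : (0:ℝ) ≤ 2),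
      show h / 6 * 2 = h / 3 by ring]
  have hK : ((h / 6) ^ (p + 1) + (h / 3) ^ (p + 1)) / (p + 1)
      = (h / 6) ^ (p + 1) * ((1 + 2 ^ (p + 1)) / (p + 1)) := by rw [hK']; ring
  rw [hK]
  rw [Real.mul_rpow (by positivity) (by positivity)]
  rw [← Real.rpow_mul (by positivity : (0:ℝ) ≤ h / 6)]
  rw [Real.div_rpow hT.le hp1.le]
  rw [show (3:ℝ) ^ (p + 1) * (p + 1) = (3 ^ (p + 1) * (p + 1)) from rfl]
  rw [Real.div_rpow hT.le (by positivity : (0:ℝ) ≤ 3 ^ (p + 1) * (p + 1))]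
  rw [Real.mul_rpow (by positivity : (0:ℝ) ≤ (3:ℝ) ^ (p + 1)) hp1.le]
  rw [← Real.rpow_mul (by norm_num : (0:ℝ) ≤ (3:ℝ))]
  set s := (p + 1) * (1 / p) with hs_def
  have hX : (0:ℝ) < (1 + 2 ^ (p + 1)) ^ (1 / p) := Real.rpow_pos_of_pos hT _
  have hQ : (0:ℝ) < (p + 1) ^ (1 / p) := Real.rpow_pos_of_pos hp1 _
  have key : (h / 6) ^ s * (h / 8) ^ (1 / r) / h = h / 4 ^ (1 + 1 / r) / 3 ^ s := by
    have hinvp : 1 / p = 1 - 1 / r := by linarith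
    have hpr' : r + p = p * r := by
      field_simp at hpr; linarith
    have hs2 : s + 1 / r = 2 := by
      rw [hs_def]; field_simp; linarith
    have h36 : (h / 6) ^ s * 3 ^ s = (h / 2) ^ s := by
      rw [← Real.mul_rpow (by positivity) (by norm_num), show h / 6 * 3 = h / 2 by ring]
    have h8 : (8:ℝ) ^ (1 / r) = 2 ^ (3 * (1 / r)) := by
      rw [show (8:ℝ) = 2 ^ (3:ℝ) by norm_num [Real.rpow_natCast], ← Real.rpow_mul (by norm_num)]
    have h4 : (4:ℝ) ^ (1 + 1 / r) = 2 ^ (2 * (1 + 1 / r)) := by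
      rw [show (4:ℝ) = 2 ^ (2:ℝ) by norm_num [Real.rpow_natCast], ← Real.rpow_mul (by norm_num)]
    have hh2 : h ^ s * h ^ (1 / r) = h ^ (2:ℝ) := by
      rw [← Real.rpow_add hh, hs2]
    have h2e : (2:ℝ) ^ s * 2 ^ (3 * (1 / r)) = 2 ^ (2 * (1 + 1 / r)) := by
      rw [← Real.rpow_add two_pos]
      congr 1
      have : s = 2 - 1 / r := by linarith
      rw [this]; ring
    have e1 : (h / 6) ^ s * (h / 8) ^ (1 / r) * 3 ^ s * 4 ^ (1 + 1 / r) = h ^ (2:ℝ) := by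
      calc (h / 6) ^ s * (h / 8) ^ (1 / r) * 3 ^ s * 4 ^ (1 + 1 / r)
          = ((h / 6) ^ s * 3 ^ s) * (h / 8) ^ (1 / r) * 4 ^ (1 + 1 / r) := by ring
        _ = (h / 2) ^ s * (h / 8) ^ (1 / r) * 4 ^ (1 + 1 / r) := by rw [h36]
        _ = (h ^ s / 2 ^ s) * (h ^ (1 / r) / 8 ^ (1 / r)) * 4 ^ (1 + 1 / r) := by
            rw [Real.div_rpow hh.le (by norm_num), Real.div_rpow hh.le (by norm_num)]
        _ = (h ^ s * h ^ (1 / r)) * (4 ^ (1 + 1 / r) / (2 ^ s * 8 ^ (1 / r))) := by ring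
        _ = h ^ (2:ℝ) * 1 := by
            rw [hh2, h8, h4, h2e, div_self (by positivity)]
        _ = h ^ (2:ℝ) := by ring
    have e2 : (h / 6) ^ s * (h / 8) ^ (1 / r) / h * (3 ^ s * 4 ^ (1 + 1 / r)) = h := by
      have e3 : (h / 6) ^ s * (h / 8) ^ (1 / r) / h * (3 ^ s * 4 ^ (1 + 1 / r))
          = ((h / 6) ^ s * (h / 8) ^ (1 / r) * 3 ^ s * 4 ^ (1 + 1 / r)) / h := by ring
      rw [e3, e1, show ((2:ℝ)) = ((2:ℕ):ℝ) by norm_num, Real.rpow_natCast, pow_two,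
        mul_div_assoc, div_self hh.ne', mul_one]
    rw [div_div, eq_div_iff (by positivity : ((4:ℝ) ^ (1 + 1 / r) * 3 ^ s) ≠ 0)]
    linear_combination e2
  calc (h / 6) ^ s * ((1 + 2 ^ (p + 1)) ^ (1 / p) / (p + 1) ^ (1 / p)) * (h / 8) ^ (1 / r) / h
      = ((h / 6) ^ s * (h / 8) ^ (1 / r) / h)
          * ((1 + 2 ^ (p + 1)) ^ (1 / p) / (p + 1) ^ (1 / p)) := by ring
    _ = (h / 4 ^ (1 + 1 / r) / 3 ^ s)
          * ((1 + 2 ^ (p + 1)) ^ (1 / p) / (p + 1) ^ (1 / p)) := by rw [key]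
    _ = h / 4 ^ (1 + 1 / r) * ((1 + 2 ^ (p + 1)) ^ (1 / p) / (3 ^ s * (p + 1) ^ (1 / p))) := by
        ring

lemma holder_int {p r : ℝ} (hpr : Real.HolderConjugate p r) {a b : ℝ} (hab : a ≤ b)
    {F G : ℝ → ℝ} (hF : Continuous F) (hFn : ∀ x, 0 ≤ F x)
    {N : ℝ} (hN : ∀ x ∈ Set.Ioc a b, F x ≤ N)
    (hG : AEStronglyMeasurable G (volume.restrict (Set.Ioc a b)))
    (hGn : ∀ x, 0 ≤ G x) {M : ℝ} (hM : ∀ x ∈ Set.Ioc a b, G x ≤ M) :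
    ∫ x in a..b, F x * G x
      ≤ (∫ x in a..b, F x ^ p) ^ (1 / p) * (∫ x in a..b, G x ^ r) ^ (1 / r) := by
  rw [intervalIntegral.integral_of_le hab, intervalIntegral.integral_of_le hab,
    intervalIntegral.integral_of_le hab]
  have hfin : IsFiniteMeasure (volume.restrict (Set.Ioc a b)) :=
    ⟨by rw [Measure.restrict_apply_univ]; exact measure_Ioc_lt_top⟩
  have hFm : MemLp F (ENNReal.ofReal p) (volume.restrict (Set.Ioc a b)) := by
    refine MemLp.of_bound hF.aestronglyMeasurable N ?_
    refine (ae_restrict_iff' measurableSet_Ioc).2 (Filter.Eventually.of_forall fun x hx => ?_)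
    rw [Real.norm_of_nonneg (hFn x)]; exact hN x hx
  have hGm : MemLp G (ENNReal.ofReal r) (volume.restrict (Set.Ioc a b)) := by
    refine MemLp.of_bound hG M ?_
    refine (ae_restrict_iff' measurableSet_Ioc).2 (Filter.Eventually.of_forall fun x hx => ?_)
    rw [Real.norm_of_nonneg (hGn x)]; exact hM x hx
  exact MeasureTheory.integral_mul_le_Lp_mul_Lq_of_nonneg hpr
    (Filter.Eventually.of_forall hFn) (Filter.Eventually.of_forall hGn) hFm hGm

set_option maxHeartbeats 2000000 in
theorem stmt_7 (f f' : ℝ → ℝ) (u v p r : ℝ) (huv : u < v)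
    (hp : 1 < p) (hr : 1 < r) (hpr : 1 / p + 1 / r = 1)
    (hd : ∀ x ∈ Set.Icc u v, HasDerivAt f (f' x) x)
    (hint : IntervalIntegrable f' volume u v)
    (hc : ConvexOn ℝ (Set.Icc u v) (fun x => |f' x| ^ r)) :
    |(1 / 6) * (f u + f v + 4 * f ((u + v) / 2))
        - (1 / (v - u)) * ∫ x in u..v, f x|
      ≤ ((v - u) / 4 ^ (1 + 1 / r)) *
          ((1 + 2 ^ (p + 1)) / (3 ^ (p + 1) * (p + 1))) ^ (1 / p) *
          ((3 * |f' u| ^ r + |f' v| ^ r) ^ (1 / r)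
            + (|f' u| ^ r + 3 * |f' v| ^ r) ^ (1 / r)) := by
  have hh : (0:ℝ) < v - u := by linarith
  have hp0 : (0:ℝ) < p := by linarith
  have hr0 : (0:ℝ) < r := by linarith
  have hpc : Real.HolderConjugate p r := ⟨by simpa [one_div] using hpr, hp0, hr0⟩
  set m : ℝ := (u + v) / 2 with hm
  have hum : u ≤ m := by rw [hm]; linarith
  have hmv : m ≤ v := by rw [hm]; linarith
  set a1 : ℝ := (5 * u + v) / 6 with ha1
  set b1 : ℝ := (u + 5 * v) / 6 with hb1
  have hua1 : u ≤ a1 := by rw [ha1]; linarith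
  have ha1m : a1 ≤ m := by rw [ha1, hm]; linarith
  have hmb1 : m ≤ b1 := by rw [hm, hb1]; linarith
  have hb1v : b1 ≤ v := by rw [hb1]; linarith
  have hA0 : (0:ℝ) ≤ |f' u| ^ r := Real.rpow_nonneg (abs_nonneg _) _
  have hB0 : (0:ℝ) ≤ |f' v| ^ r := Real.rpow_nonneg (abs_nonneg _) _
  -- convexity pointwise bound
  have hconv : ∀ x ∈ Set.Icc u v,
      |f' x| ^ r ≤ ((v - x) * |f' u| ^ r + (x - u) * |f' v| ^ r) / (v - u) := by
    intro x hx
    have h1 : 0 ≤ (v - x) / (v - u) := div_nonneg (by linarith [hx.2]) hh.le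
    have h2 : 0 ≤ (x - u) / (v - u) := div_nonneg (by linarith [hx.1]) hh.le
    have h3 : (v - x) / (v - u) + (x - u) / (v - u) = 1 := by field_simp; ring
    have h4 := hc.2 (Set.left_mem_Icc.2 huv.le) (Set.right_mem_Icc.2 huv.le) h1 h2 h3
    simp only [smul_eq_mul] at h4
    have h5 : (v - x) / (v - u) * u + (x - u) / (v - u) * v = x := by field_simp; ring
    rw [h5] at h4
    calc |f' x| ^ r ≤ (v - x) / (v - u) * |f' u| ^ r + (x - u) / (v - u) * |f' v| ^ r := h4
      _ = ((v - x) * |f' u| ^ r + (x - u) * |f' v| ^ r) / (v - u) := by ring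
  have hbound : ∀ x ∈ Set.Icc u v, |f' x| ^ r ≤ |f' u| ^ r + |f' v| ^ r := by
    intro x hx
    refine (hconv x hx).trans ?_
    rw [div_le_iff₀ hh]
    nlinarith [hx.1, hx.2, mul_le_mul_of_nonneg_right (show v - x ≤ v - u by linarith [hx.1]) hA0,
      mul_le_mul_of_nonneg_right (show x - u ≤ v - u by linarith [hx.2]) hB0]
  -- measurability of |f'| on subintervals of [u,v]
  have hkey : ∀ x ∈ Set.Icc u v, deriv f x = f' x := fun x hx => (hd x hx).deriv
  have habs_meas : ∀ s t : ℝ, Set.Ioc s t ⊆ Set.Icc u v →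
      AEStronglyMeasurable (fun x => |f' x|) (volume.restrict (Set.Ioc s t)) := by
    intro s t hsub
    have h0 : Measurable fun x => |deriv f x| := (measurable_deriv f).abs
    refine (h0.aestronglyMeasurable.restrict).congr ?_
    refine (ae_restrict_iff' measurableSet_Ioc).2 (Filter.Eventually.of_forall fun x hx => ?_)
    show |deriv f x| = |f' x|
    rw [hkey x (hsub hx)]
  have hg_meas : ∀ s t : ℝ, Set.Ioc s t ⊆ Set.Icc u v →
      AEStronglyMeasurable (fun x => |f' x| ^ r) (volume.restrict (Set.Ioc s t)) := by
    intro s t hsub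
    have h0 : Measurable fun x => |deriv f x| ^ r := by measurability
    refine (h0.aestronglyMeasurable.restrict).congr ?_
    refine (ae_restrict_iff' measurableSet_Ioc).2 (Filter.Eventually.of_forall fun x hx => ?_)
    show |deriv f x| ^ r = |f' x| ^ r
    rw [hkey x (hsub hx)]
  -- interval integrability of |f'|^r on subintervals
  have hg_int : ∀ s t : ℝ, u ≤ s → s ≤ t → t ≤ v →
      IntervalIntegrable (fun x => |f' x| ^ r) volume s t := by
    intro s t hus hst htv
    rw [intervalIntegrable_iff_integrableOn_Ioc_of_le hst]
    have hsub : Set.Ioc s t ⊆ Set.Icc u v := fun x hx => ⟨le_trans hus hx.1.le, le_trans hx.2 htv⟩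
    refine Integrable.mono' (g := fun _ => |f' u| ^ r + |f' v| ^ r)
      (integrableOn_const measure_Ioc_lt_top.ne) (hg_meas s t hsub) ?_
    refine (ae_restrict_iff' measurableSet_Ioc).2 (Filter.Eventually.of_forall fun x hx => ?_)
    rw [Real.norm_of_nonneg (Real.rpow_nonneg (abs_nonneg _) _)]
    exact hbound x (hsub hx)
  -- integration by parts on the two halves
  have hfc : ContinuousOn f (Set.uIcc u v) := by
    rw [Set.uIcc_of_le huv.le]
    exact fun x hx => (hd x hx).continuousAt.continuousWithinAt
  have hfi : IntervalIntegrable f volume u v := hfc.intervalIntegrable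
  have hsub1 : Set.uIcc u m ⊆ Set.uIcc u v := by
    rw [Set.uIcc_of_le hum, Set.uIcc_of_le huv.le]; exact Set.Icc_subset_Icc le_rfl hmv
  have hsub2 : Set.uIcc m v ⊆ Set.uIcc u v := by
    rw [Set.uIcc_of_le hmv, Set.uIcc_of_le huv.le]; exact Set.Icc_subset_Icc hum le_rfl
  have hfi1 : IntervalIntegrable f volume u m := hfi.mono_set hsub1
  have hfi2 : IntervalIntegrable f volume m v := hfi.mono_set hsub2
  have hI1 : ∫ x in u..m, (x - a1) * f' x
      = (m - a1) * f m - (u - a1) * f u - ∫ x in u..m, f x := by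
    have h := intervalIntegral.integral_mul_deriv_eq_deriv_mul
      (fun x _ => (hasDerivAt_id x).sub_const a1)
      (fun x hx => hd x (by
        rw [Set.uIcc_of_le hum] at hx
        exact ⟨hx.1, le_trans hx.2 hmv⟩))
      intervalIntegrable_const (hint.mono_set hsub1)
    simpa using h
  have hI2 : ∫ x in m..v, (x - b1) * f' x
      = (v - b1) * f v - (m - b1) * f m - ∫ x in m..v, f x := by
    have h := intervalIntegral.integral_mul_deriv_eq_deriv_mul
      (fun x _ => (hasDerivAt_id x).sub_const b1)
      (fun x hx => hd x (by
        rw [Set.uIcc_of_le hmv] at hx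
        exact ⟨le_trans hum hx.1, hx.2⟩))
      intervalIntegrable_const (hint.mono_set hsub2)
    simpa using h
  have hadj : (∫ x in u..m, f x) + ∫ x in m..v, f x = ∫ x in u..v, f x :=
    intervalIntegral.integral_add_adjacent_intervals hfi1 hfi2
  -- the key identity
  have hid : (1 / 6) * (f u + f v + 4 * f m) - (1 / (v - u)) * ∫ x in u..v, f x
      = ((∫ x in u..m, (x - a1) * f' x) + ∫ x in m..v, (x - b1) * f' x) / (v - u) := by
    rw [hI1, hI2, ← hadj, hm, ha1, hb1]
    field_simp
    ring
  -- convexity integral bounds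
  have hlin_int : ∀ s t : ℝ, IntervalIntegrable
      (fun x => ((v - x) * |f' u| ^ r + (x - u) * |f' v| ^ r) / (v - u)) volume s t := by
    intro s t
    exact ((((continuous_const.sub continuous_id).mul continuous_const).add
      ((continuous_id.sub continuous_const).mul continuous_const)).div_const _).intervalIntegrable _ _
  have hlin_eval : ∀ s t : ℝ,
      ∫ x in s..t, ((v - x) * |f' u| ^ r + (x - u) * |f' v| ^ r) / (v - u)
        = (v * |f' u| ^ r - u * |f' v| ^ r) / (v - u) * (t - s)
          + (|f' v| ^ r - |f' u| ^ r) / (v - u) * ((t ^ 2 - s ^ 2) / 2) := by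
    intro s t
    have hrw : ∀ x : ℝ, ((v - x) * |f' u| ^ r + (x - u) * |f' v| ^ r) / (v - u)
        = (v * |f' u| ^ r - u * |f' v| ^ r) / (v - u)
          + (|f' v| ^ r - |f' u| ^ r) / (v - u) * x := by
      intro x; field_simp; ring
    simp_rw [hrw]
    rw [intervalIntegral.integral_add intervalIntegrable_const
      ((continuous_mul_left _).intervalIntegrable _ _),
      intervalIntegral.integral_const, intervalIntegral.integral_const_mul, integral_id]
    simp [smul_eq_mul]
    ring
  have hJ1 : ∫ x in u..m, |f' x| ^ r ≤ (v - u) / 8 * (3 * |f' u| ^ r + |f' v| ^ r) := by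
    have step1 := intervalIntegral.integral_mono_on hum (hg_int u m le_rfl hum hmv)
      (hlin_int u m) (fun x hx => hconv x ⟨hx.1, le_trans hx.2 hmv⟩)
    refine step1.trans ?_
    rw [hlin_eval u m, hm]
    apply le_of_eq
    field_simp
    ring
  have hJ2 : ∫ x in m..v, |f' x| ^ r ≤ (v - u) / 8 * (|f' u| ^ r + 3 * |f' v| ^ r) := by
    have step1 := intervalIntegral.integral_mono_on hmv (hg_int m v hum hmv le_rfl)
      (hlin_int m v) (fun x hx => hconv x ⟨le_trans hum hx.1, hx.2⟩)
    refine step1.trans ?_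
    rw [hlin_eval m v, hm]
    apply le_of_eq
    field_simp
    ring
  -- kernel integrals
  have hK1 : ∫ x in u..m, |x - a1| ^ p
      = (((v - u) / 6) ^ (p + 1) + ((v - u) / 3) ^ (p + 1)) / (p + 1) := by
    rw [kernel_int hp0.le hua1 ha1m, show a1 - u = (v - u) / 6 by rw [ha1]; ring,
      show m - a1 = (v - u) / 3 by rw [hm, ha1]; ring]
  have hK2 : ∫ x in m..v, |x - b1| ^ p
      = (((v - u) / 6) ^ (p + 1) + ((v - u) / 3) ^ (p + 1)) / (p + 1) := by
    rw [kernel_int hp0.le hmb1 hb1v, show b1 - m = (v - u) / 3 by rw [hm, hb1]; ring,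
      show v - b1 = (v - u) / 6 by rw [hb1]; ring, add_comm]
  have hKpos : (0:ℝ) < (((v - u) / 6) ^ (p + 1) + ((v - u) / 3) ^ (p + 1)) / (p + 1) := by
    have h6 : (0:ℝ) < ((v - u) / 6) ^ (p + 1) := Real.rpow_pos_of_pos (by linarith) _
    have h3 : (0:ℝ) < ((v - u) / 3) ^ (p + 1) := Real.rpow_pos_of_pos (by linarith) _
    positivity
  -- bound on |f'|
  have habs_bd : ∀ x ∈ Set.Icc u v, |f' x| ≤ (|f' u| ^ r + |f' v| ^ r) ^ (1 / r) := by
    intro x hx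
    have h1 : |f' x| = (|f' x| ^ r) ^ (1 / r) := by
      rw [← Real.rpow_mul (abs_nonneg _), mul_one_div, div_self (ne_of_gt hr0), Real.rpow_one]
    rw [h1]
    exact Real.rpow_le_rpow (Real.rpow_nonneg (abs_nonneg _) _) (hbound x hx) (by positivity)
  -- Hölder on the two halves
  have hFbd1 : ∀ x ∈ Set.Ioc u m, |x - a1| ≤ v - u := by
    intro x hx
    rw [abs_le]
    constructor <;> [linarith [hx.1, hb1v]; linarith [hx.2, hua1]]
  have hFbd2 : ∀ x ∈ Set.Ioc m v, |x - b1| ≤ v - u := by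
    intro x hx
    rw [abs_le]
    constructor <;> [linarith [hx.1, hb1v]; linarith [hx.2, hua1]]
  have hH1 : |∫ x in u..m, (x - a1) * f' x|
      ≤ ((∫ x in u..m, |x - a1| ^ p) ^ (1 / p)) * ((∫ x in u..m, |f' x| ^ r) ^ (1 / r)) := by
    calc |∫ x in u..m, (x - a1) * f' x| ≤ ∫ x in u..m, |(x - a1) * f' x| :=
        intervalIntegral.abs_integral_le_integral_abs hum
      _ = ∫ x in u..m, |x - a1| * |f' x| := by
          apply intervalIntegral.integral_congr
          intro x _
          exact abs_mul _ _
      _ ≤ _ := holder_int hpc hum ((continuous_id.sub continuous_const).abs)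
          (fun x => abs_nonneg _) hFbd1
          (habs_meas u m (fun x hx => ⟨hx.1.le, hx.2.trans hmv⟩))
          (fun x => abs_nonneg _)
          (fun x hx => habs_bd x ⟨hx.1.le, hx.2.trans hmv⟩)
  have hH2 : |∫ x in m..v, (x - b1) * f' x|
      ≤ ((∫ x in m..v, |x - b1| ^ p) ^ (1 / p)) * ((∫ x in m..v, |f' x| ^ r) ^ (1 / r)) := by
    calc |∫ x in m..v, (x - b1) * f' x| ≤ ∫ x in m..v, |(x - b1) * f' x| :=
        intervalIntegral.abs_integral_le_integral_abs hmv
      _ = ∫ x in m..v, |x - b1| * |f' x| := by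
          apply intervalIntegral.integral_congr
          intro x _
          exact abs_mul _ _
      _ ≤ _ := holder_int hpc hmv ((continuous_id.sub continuous_const).abs)
          (fun x => abs_nonneg _) hFbd2
          (habs_meas m v (fun x hx => ⟨hum.trans hx.1.le, hx.2⟩))
          (fun x => abs_nonneg _)
          (fun x hx => habs_bd x ⟨hum.trans hx.1.le, hx.2⟩)
  have hmono1 : (∫ x in u..m, |f' x| ^ r) ^ (1 / r)
      ≤ ((v - u) / 8 * (3 * |f' u| ^ r + |f' v| ^ r)) ^ (1 / r) :=
    Real.rpow_le_rpow (intervalIntegral.integral_nonneg hum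
      (fun x _ => Real.rpow_nonneg (abs_nonneg _) _)) hJ1 (by positivity)
  have hmono2 : (∫ x in m..v, |f' x| ^ r) ^ (1 / r)
      ≤ ((v - u) / 8 * (|f' u| ^ r + 3 * |f' v| ^ r)) ^ (1 / r) :=
    Real.rpow_le_rpow (intervalIntegral.integral_nonneg hmv
      (fun x _ => Real.rpow_nonneg (abs_nonneg _) _)) hJ2 (by positivity)
  have hB1 : |∫ x in u..m, (x - a1) * f' x|
      ≤ ((((v - u) / 6) ^ (p + 1) + ((v - u) / 3) ^ (p + 1)) / (p + 1)) ^ (1 / p)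
          * ((v - u) / 8 * (3 * |f' u| ^ r + |f' v| ^ r)) ^ (1 / r) := by
    refine hH1.trans ?_
    rw [hK1]
    exact mul_le_mul_of_nonneg_left hmono1 (Real.rpow_nonneg hKpos.le _)
  have hB2 : |∫ x in m..v, (x - b1) * f' x|
      ≤ ((((v - u) / 6) ^ (p + 1) + ((v - u) / 3) ^ (p + 1)) / (p + 1)) ^ (1 / p)
          * ((v - u) / 8 * (|f' u| ^ r + 3 * |f' v| ^ r)) ^ (1 / r) := by
    refine hH2.trans ?_
    rw [hK2]
    exact mul_le_mul_of_nonneg_left hmono2 (Real.rpow_nonneg hKpos.le _)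
  have habs2 : |(∫ x in u..m, (x - a1) * f' x) + ∫ x in m..v, (x - b1) * f' x|
      ≤ ((((v - u) / 6) ^ (p + 1) + ((v - u) / 3) ^ (p + 1)) / (p + 1)) ^ (1 / p)
          * ((v - u) / 8 * (3 * |f' u| ^ r + |f' v| ^ r)) ^ (1 / r)
        + ((((v - u) / 6) ^ (p + 1) + ((v - u) / 3) ^ (p + 1)) / (p + 1)) ^ (1 / p)
          * ((v - u) / 8 * (|f' u| ^ r + 3 * |f' v| ^ r)) ^ (1 / r) :=
    (abs_add_le _ _).trans (add_le_add hB1 hB2)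
  rw [hid, abs_div, abs_of_pos hh]
  calc |(∫ x in u..m, (x - a1) * f' x) + ∫ x in m..v, (x - b1) * f' x| / (v - u)
      ≤ (((((v - u) / 6) ^ (p + 1) + ((v - u) / 3) ^ (p + 1)) / (p + 1)) ^ (1 / p)
          * ((v - u) / 8 * (3 * |f' u| ^ r + |f' v| ^ r)) ^ (1 / r)
        + ((((v - u) / 6) ^ (p + 1) + ((v - u) / 3) ^ (p + 1)) / (p + 1)) ^ (1 / p)
          * ((v - u) / 8 * (|f' u| ^ r + 3 * |f' v| ^ r)) ^ (1 / r)) / (v - u) := by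
        exact div_le_div_of_nonneg_right habs2 hh.le
    _ = ((((v - u) / 6) ^ (p + 1) + ((v - u) / 3) ^ (p + 1)) / (p + 1)) ^ (1 / p)
          * ((v - u) / 8) ^ (1 / r) / (v - u)
          * ((3 * |f' u| ^ r + |f' v| ^ r) ^ (1 / r) + (|f' u| ^ r + 3 * |f' v| ^ r) ^ (1 / r)) := by
        rw [Real.mul_rpow (by positivity) (by positivity),
          Real.mul_rpow (by positivity) (by positivity)]
        ring
    _ = ((v - u) / 4 ^ (1 + 1 / r)) * ((1 + 2 ^ (p + 1)) / (3 ^ (p + 1) * (p + 1))) ^ (1 / p)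
          * ((3 * |f' u| ^ r + |f' v| ^ r) ^ (1 / r) + (|f' u| ^ r + 3 * |f' v| ^ r) ^ (1 / r)) := by
        rw [const_id hp hr hpr hh]
end

section
/- Let f be differentiable on an interval containing [u,v] with 0 ≤ u < v, f' integrable, and |f'|^r s-convex in the second sense on [u,v] for some s ∈ (0,1], r ≥ 1. Then |(1/2)[(f(u)+f(v))/2 + f((u+v)/2)] - (1/(v-u)) ∫ᵤᵛ f(x) dx| ≤ ((v-u)/(8(2^(s-1)(s+1)(s+2))^(1/r))) (1/2)^(1-1/r) · { [(3^(s+2)/2^(s+1) - (2^(s+2)+s-2^(s+1)s+4)/2) |f'(u)|^r + (s/2 + 1/2^(s+1)) |f'(v)|^r]^(1/r) + [(s/2 + 1/2^(s+1)) |f'(u)|^r + (3^(s+2)/2^(s+1) - (2^(s+2)+s-2^(s+1)s+4)/2) |f'(v)|^r]^(1/r) }. -/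
open MeasureTheory intervalIntegral

/-- `g` is s-convex in the second sense on `[u, v]`. -/
def SConvexSecond (s u v : ℝ) (g : ℝ → ℝ) : Prop :=
  ∀ x ∈ Set.Icc u v, ∀ y ∈ Set.Icc u v, ∀ a ∈ Set.Icc (0:ℝ) 1,
    g (a * x + (1 - a) * y) ≤ a ^ s * g x + (1 - a) ^ s * g y


lemma cont_rpow {s : ℝ} (hs : 0 < s) : Continuous fun x : ℝ => x ^ s :=
  continuous_iff_continuousAt.2 fun x => Real.continuousAt_rpow_const x s (Or.inr hs.le)

lemma ftcR {s : ℝ} (hs : 0 < s) (o p a b : ℝ) (ho : o ≤ a) (hab : a ≤ b) :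
    ∫ x in a..b, (x - p) * (x - o) ^ s
      = ((b-o)^(s+2)/(s+2) + (o-p)*(b-o)^(s+1)/(s+1))
        - ((a-o)^(s+2)/(s+2) + (o-p)*(a-o)^(s+1)/(s+1)) := by
  have h1 : s + 1 ≠ 0 := by positivity
  have h2 : s + 2 ≠ 0 := by positivity
  have key : ∀ x ∈ Set.uIcc a b,
      HasDerivAt (fun x => (x-o)^(s+2)/(s+2) + (o-p)*((x-o)^(s+1))/(s+1))
        ((x - p) * (x - o) ^ s) x := by
    intro x hx
    rw [Set.uIcc_of_le hab] at hx
    have hxo : 0 ≤ x - o := by have := hx.1; linarith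
    have d1 : HasDerivAt (fun x : ℝ => (x-o)^(s+2)) (1 * (s+2) * (x-o)^(s+2-1)) x :=
      ((hasDerivAt_id x).sub_const o).rpow_const (Or.inr (by linarith))
    have d2 : HasDerivAt (fun x : ℝ => (x-o)^(s+1)) (1 * (s+1) * (x-o)^(s+1-1)) x :=
      ((hasDerivAt_id x).sub_const o).rpow_const (Or.inr (by linarith))
    have d := (d1.div_const (s+2)).add ((d2.const_mul (o-p)).div_const (s+1))
    refine d.congr_deriv ?_; symm
    have e1 : (x-o)^(s+1) = (x-o)^s * (x-o) := by
      rw [Real.rpow_add' hxo (by linarith), Real.rpow_one]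
    have e2 : s + 2 - 1 = s + 1 := by ring
    have e3 : s + 1 - 1 = s := by ring
    rw [e2, e3, e1]
    field_simp
    ring
  rw [intervalIntegral.integral_eq_sub_of_hasDerivAt key ?_]
  exact ((continuous_id.sub continuous_const).mul
    ((cont_rpow hs).comp (continuous_id.sub continuous_const))).intervalIntegrable a b

lemma ftcL {s : ℝ} (hs : 0 < s) (o p a b : ℝ) (hb : b ≤ o) (hab : a ≤ b) :
    ∫ x in a..b, (x - p) * (o - x) ^ s
      = ((o-b)^(s+2)/(s+2) - (o-p)*(o-b)^(s+1)/(s+1))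
        - ((o-a)^(s+2)/(s+2) - (o-p)*(o-a)^(s+1)/(s+1)) := by
  have h1 : s + 1 ≠ 0 := by positivity
  have h2 : s + 2 ≠ 0 := by positivity
  have key : ∀ x ∈ Set.uIcc a b,
      HasDerivAt (fun x => (o-x)^(s+2)/(s+2) - (o-p)*((o-x)^(s+1))/(s+1))
        ((x - p) * (o - x) ^ s) x := by
    intro x hx
    rw [Set.uIcc_of_le hab] at hx
    have hxo : 0 ≤ o - x := by have := hx.2; linarith
    have d1 : HasDerivAt (fun x : ℝ => (o-x)^(s+2)) ((-1) * (s+2) * (o-x)^(s+2-1)) x :=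
      ((hasDerivAt_id x).const_sub o).rpow_const (Or.inr (by linarith))
    have d2 : HasDerivAt (fun x : ℝ => (o-x)^(s+1)) ((-1) * (s+1) * (o-x)^(s+1-1)) x :=
      ((hasDerivAt_id x).const_sub o).rpow_const (Or.inr (by linarith))
    have d := (d1.div_const (s+2)).sub ((d2.const_mul (o-p)).div_const (s+1))
    refine d.congr_deriv ?_; symm
    have e1 : (o-x)^(s+1) = (o-x)^s * (o-x) := by
      rw [Real.rpow_add' hxo (by linarith), Real.rpow_one]
    have e2 : s + 2 - 1 = s + 1 := by ring
    have e3 : s + 1 - 1 = s := by ring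
    rw [e2, e3, e1]
    field_simp
    ring
  rw [intervalIntegral.integral_eq_sub_of_hasDerivAt key ?_]
  exact ((continuous_id.sub continuous_const).mul
    ((cont_rpow hs).comp (continuous_const.sub continuous_id))).intervalIntegrable a b

lemma rpow_split2 {y : ℝ} (hy : 0 < y) (s : ℝ) : y^(s+2) = y^s * y^2 := by
  rw [Real.rpow_add hy, Real.rpow_two]

lemma rpow_split1 {y : ℝ} (hy : 0 < y) (s : ℝ) : y^(s+1) = y^s * y := by
  rw [Real.rpow_add hy, Real.rpow_one]

lemma Cb1_eq {u v s : ℝ} (huv : u < v) (hs0 : 0 < s) :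
    ∫ x in u..(u+v)/2, |x - (3*u+v)/4| * (x-u)^s
      = (v-u)^s * (v-u)^2 *
          ((s/2 + 1/2^(s+1)) / (8 * (2^(s-1)*(s+1)*(s+2)))) := by
  have hc : (0:ℝ) < v - u := by linarith
  have h1 : s + 1 ≠ 0 := by positivity
  have h2 : s + 2 ≠ 0 := by positivity
  have hX : (0:ℝ) < 2 ^ s := Real.rpow_pos_of_pos two_pos s
  have hup : u ≤ (3*u+v)/4 := by linarith
  have hpm : (3*u+v)/4 ≤ (u+v)/2 := by linarith
  have hi : ∀ a b : ℝ, IntervalIntegrable (fun x => |x - (3*u+v)/4| * (x-u)^s) volume a b :=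
    fun a b => (((continuous_id.sub continuous_const).abs).mul
      ((cont_rpow hs0).comp (continuous_id.sub continuous_const))).intervalIntegrable a b
  rw [← intervalIntegral.integral_add_adjacent_intervals (b := (3*u+v)/4) (hi _ _) (hi _ _)]
  have e1 : ∫ x in u..(3*u+v)/4, |x - (3*u+v)/4| * (x-u)^s
      = -∫ x in u..(3*u+v)/4, (x - (3*u+v)/4) * (x-u)^s := by
    rw [← intervalIntegral.integral_neg]
    apply intervalIntegral.integral_congr
    intro x hx
    rw [Set.uIcc_of_le hup] at hx
    have hx2 : x ≤ (3*u+v)/4 := hx.2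
    show |x - (3*u+v)/4| * (x-u)^s = -((x - (3*u+v)/4) * (x-u)^s)
    rw [abs_of_nonpos (by linarith)]
    ring
  have e2 : ∫ x in ((3*u+v)/4)..((u+v)/2), |x - (3*u+v)/4| * (x-u)^s
      = ∫ x in ((3*u+v)/4)..((u+v)/2), (x - (3*u+v)/4) * (x-u)^s := by
    apply intervalIntegral.integral_congr
    intro x hx
    rw [Set.uIcc_of_le hpm] at hx
    have hx1 : (3*u+v)/4 ≤ x := hx.1
    show |x - (3*u+v)/4| * (x-u)^s = (x - (3*u+v)/4) * (x-u)^s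
    rw [abs_of_nonneg (by linarith)]
  rw [e1, e2, ftcR hs0 u _ u _ le_rfl hup, ftcR hs0 u _ _ _ hup hpm]
  rw [show (3*u+v)/4 - u = (v-u)/4 from by ring, show (u+v)/2 - u = (v-u)/2 from by ring,
    show u - u = (0:ℝ) from by ring, show u - (3*u+v)/4 = -((v-u)/4) from by ring]
  rw [Real.zero_rpow h2, Real.zero_rpow h1]
  have hd2 : ((v-u)/2) ^ (s+2) = (v-u)^s * (v-u)^2 / (2^s * 4) := by
    rw [rpow_split2 (by linarith) s, Real.div_rpow hc.le (by norm_num)]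
    field_simp
    try ring
  have hd1 : ((v-u)/2) ^ (s+1) = (v-u)^s * (v-u) / (2^s * 2) := by
    rw [rpow_split1 (by linarith) s, Real.div_rpow hc.le (by norm_num)]
    field_simp
    try ring
  have h4 : (4:ℝ)^s = 2^s * 2^s := by
    rw [show (4:ℝ) = 2*2 from by norm_num, Real.mul_rpow (by norm_num) (by norm_num)]
  have hq2 : ((v-u)/4) ^ (s+2) = (v-u)^s * (v-u)^2 / (2^s * 2^s * 16) := by
    rw [rpow_split2 (by linarith) s, Real.div_rpow hc.le (by norm_num), h4]
    field_simp
    try ring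
  have hq1 : ((v-u)/4) ^ (s+1) = (v-u)^s * (v-u) / (2^s * 2^s * 4) := by
    rw [rpow_split1 (by linarith) s, Real.div_rpow hc.le (by norm_num), h4]
    field_simp
    try ring
  rw [hd2, hd1, hq2, hq1, Real.rpow_add two_pos s 1, Real.rpow_one,
    Real.rpow_sub two_pos s 1, Real.rpow_one]
  field_simp
  ring

lemma Ca1_eq {u v s : ℝ} (huv : u < v) (hs0 : 0 < s) :
    ∫ x in u..(u+v)/2, |x - (3*u+v)/4| * (v-x)^s
      = (v-u)^s * (v-u)^2 *
          ((3^(s+2)/2^(s+1) - (2^(s+2) + s - 2^(s+1)*s + 4)/2)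
            / (8 * (2^(s-1)*(s+1)*(s+2)))) := by
  have hc : (0:ℝ) < v - u := by linarith
  have h1 : s + 1 ≠ 0 := by positivity
  have h2 : s + 2 ≠ 0 := by positivity
  have hX : (0:ℝ) < 2 ^ s := Real.rpow_pos_of_pos two_pos s
  have hup : u ≤ (3*u+v)/4 := by linarith
  have hpm : (3*u+v)/4 ≤ (u+v)/2 := by linarith
  have hi : ∀ a b : ℝ, IntervalIntegrable (fun x => |x - (3*u+v)/4| * (v-x)^s) volume a b :=
    fun a b => (((continuous_id.sub continuous_const).abs).mul
      ((cont_rpow hs0).comp (continuous_const.sub continuous_id))).intervalIntegrable a b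
  rw [← intervalIntegral.integral_add_adjacent_intervals (b := (3*u+v)/4) (hi _ _) (hi _ _)]
  have e1 : ∫ x in u..(3*u+v)/4, |x - (3*u+v)/4| * (v-x)^s
      = -∫ x in u..(3*u+v)/4, (x - (3*u+v)/4) * (v-x)^s := by
    rw [← intervalIntegral.integral_neg]
    apply intervalIntegral.integral_congr
    intro x hx
    rw [Set.uIcc_of_le hup] at hx
    have hx2 : x ≤ (3*u+v)/4 := hx.2
    show |x - (3*u+v)/4| * (v-x)^s = -((x - (3*u+v)/4) * (v-x)^s)
    rw [abs_of_nonpos (by linarith)]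
    ring
  have e2 : ∫ x in ((3*u+v)/4)..((u+v)/2), |x - (3*u+v)/4| * (v-x)^s
      = ∫ x in ((3*u+v)/4)..((u+v)/2), (x - (3*u+v)/4) * (v-x)^s := by
    apply intervalIntegral.integral_congr
    intro x hx
    rw [Set.uIcc_of_le hpm] at hx
    have hx1 : (3*u+v)/4 ≤ x := hx.1
    show |x - (3*u+v)/4| * (v-x)^s = (x - (3*u+v)/4) * (v-x)^s
    rw [abs_of_nonneg (by linarith)]
  rw [e1, e2, ftcL hs0 v _ u _ (by linarith) hup, ftcL hs0 v _ _ _ (by linarith) hpm]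
  rw [show v - (3*u+v)/4 = 3*((v-u)/4) from by ring, show v - (u+v)/2 = (v-u)/2 from by ring,
    show v - u = (v-u) from rfl]
  have h4 : (4:ℝ)^s = 2^s * 2^s := by
    rw [show (4:ℝ) = 2*2 from by norm_num, Real.mul_rpow (by norm_num) (by norm_num)]
  have h34 : (3*((v-u)/4))^s = 3^s * (v-u)^s / (2^s * 2^s) := by
    rw [Real.mul_rpow (by norm_num) (by positivity), Real.div_rpow hc.le (by norm_num), h4]
    ring
  have hd2 : ((v-u)/2) ^ (s+2) = (v-u)^s * (v-u)^2 / (2^s * 4) := by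
    rw [rpow_split2 (by linarith) s, Real.div_rpow hc.le (by norm_num)]
    field_simp
    try ring
  have hd1 : ((v-u)/2) ^ (s+1) = (v-u)^s * (v-u) / (2^s * 2) := by
    rw [rpow_split1 (by linarith) s, Real.div_rpow hc.le (by norm_num)]
    field_simp
    try ring
  have hq2 : (3*((v-u)/4)) ^ (s+2) = 9 * 3^s * ((v-u)^s * (v-u)^2) / (2^s * 2^s * 16) := by
    rw [rpow_split2 (by positivity) s, h34]
    field_simp
    try ring
  have hq1 : (3*((v-u)/4)) ^ (s+1) = 3 * 3^s * ((v-u)^s * (v-u)) / (2^s * 2^s * 4) := by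
    rw [rpow_split1 (by positivity) s, h34]
    field_simp
    try ring
  have hc2 : (v-u) ^ (s+2) = (v-u)^s * (v-u)^2 := rpow_split2 hc s
  have hc1 : (v-u) ^ (s+1) = (v-u)^s * (v-u) := rpow_split1 hc s
  have h32 : (3:ℝ) ^ (s+2) = 9 * 3^s := by
    rw [rpow_split2 (by norm_num) s]; ring
  rw [hd2, hd1, hq2, hq1, hc2, hc1, h32, Real.rpow_add two_pos s 1, Real.rpow_one,
    Real.rpow_add two_pos s 2, Real.rpow_two, Real.rpow_sub two_pos s 1, Real.rpow_one]
  field_simp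
  ring


lemma W_eq {a p b : ℝ} (hap : a ≤ p) (hpb : p ≤ b) :
    ∫ x in a..b, |x - p| = ((p-a)^2 + (b-p)^2)/2 := by
  have hpoly : ∀ a' b' : ℝ, ∫ x in a'..b', (x - p) = (b'-p)^2/2 - (a'-p)^2/2 := by
    intro a' b'
    have key : ∀ x ∈ Set.uIcc a' b', HasDerivAt (fun y => (y-p)^2/2) (x - p) x := by
      intro x _
      have h := (((hasDerivAt_id x).sub_const p).pow 2).div_const 2
      refine h.congr_deriv ?_; symm
      simp
      try ring
    rw [intervalIntegral.integral_eq_sub_of_hasDerivAt key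
      ((continuous_id.sub continuous_const).intervalIntegrable _ _)]
  have hi : ∀ a' b' : ℝ, IntervalIntegrable (fun x => |x - p|) volume a' b' :=
    fun a' b' => ((continuous_id.sub continuous_const).abs).intervalIntegrable _ _
  rw [← intervalIntegral.integral_add_adjacent_intervals (b := p) (hi _ _) (hi _ _)]
  have e1 : ∫ x in a..p, |x - p| = -∫ x in a..p, (x - p) := by
    rw [← intervalIntegral.integral_neg]
    apply intervalIntegral.integral_congr
    intro x hx
    rw [Set.uIcc_of_le hap] at hx
    have hx2 : x ≤ p := hx.2
    show |x - p| = -(x - p)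
    rw [abs_of_nonpos (by linarith)]
  have e2 : ∫ x in p..b, |x - p| = ∫ x in p..b, (x - p) := by
    apply intervalIntegral.integral_congr
    intro x hx
    rw [Set.uIcc_of_le hpb] at hx
    have hx1 : p ≤ x := hx.1
    show |x - p| = x - p
    rw [abs_of_nonneg (by linarith)]
  rw [e1, e2, hpoly, hpoly]
  ring

lemma half_bound {g : ℝ → ℝ} {a b p r M : ℝ} (hr : 1 ≤ r) (hab : a ≤ b)
    (hg : AEStronglyMeasurable g (volume.restrict (Set.Ioc a b)))
    (φ : ℝ → ℝ) (hφc : Continuous φ)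
    (hφ : ∀ x ∈ Set.Icc a b, |g x| ^ r ≤ φ x)
    (hφM : ∀ x ∈ Set.Icc a b, φ x ≤ M) :
    ∫ x in a..b, |x - p| * |g x| ≤
      (∫ x in a..b, |x - p|) ^ (1 - 1/r) * (∫ x in a..b, |x - p| * φ x) ^ (1/r) := by
  have hr0 : (0:ℝ) < r := lt_of_lt_of_le one_pos hr
  set w : ℝ → ℝ := fun x => |x - p| with hw_def
  have hw : Continuous w := (continuous_id.sub continuous_const).abs
  have hw0 : ∀ x, 0 ≤ w x := fun x => abs_nonneg _
  set Cw : ℝ := |a - p| + (b - a) with hCw_def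
  have hwle : ∀ x ∈ Set.Icc a b, w x ≤ Cw := by
    intro x hx
    calc |x - p| ≤ |x - a| + |a - p| := abs_sub_le x a p
    _ ≤ Cw := by
        rw [abs_of_nonneg (by linarith [hx.1] : (0:ℝ) ≤ x - a)]
        have := hx.2; simp only [hCw_def]; linarith
  -- φ nonneg on Icc (since |g|^r ≥ 0), M nonneg
  have hφ0 : ∀ x ∈ Set.Icc a b, 0 ≤ φ x := fun x hx =>
    le_trans (Real.rpow_nonneg (abs_nonneg _) r) (hφ x hx)
  have hM0 : 0 ≤ M := le_trans (hφ0 a ⟨le_rfl, hab⟩) (hφM a ⟨le_rfl, hab⟩)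
  -- integrability of w * |g|^r
  have hgr_meas : AEStronglyMeasurable (fun x => w x * |g x| ^ r)
      (volume.restrict (Set.Ioc a b)) :=
    hw.aestronglyMeasurable.mul
      (((cont_rpow hr0).comp continuous_abs).comp_aestronglyMeasurable hg)
  have hvol : volume (Set.Ioc a b) < ⊤ := by
    rw [Real.volume_Ioc]; exact ENNReal.ofReal_lt_top
  have hint1 : IntervalIntegrable (fun x => w x * |g x| ^ r) volume a b := by
    rw [intervalIntegrable_iff_integrableOn_Ioc_of_le hab]
    refine Integrable.mono' (g := fun _ => Cw * M)
      (integrableOn_const (C := Cw * M) hvol.ne) hgr_meas ?_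
    filter_upwards [ae_restrict_mem measurableSet_Ioc] with x hx
    have hx' : x ∈ Set.Icc a b := ⟨hx.1.le, hx.2⟩
    rw [Real.norm_eq_abs, abs_of_nonneg (mul_nonneg (hw0 x) (Real.rpow_nonneg (abs_nonneg _) r))]
    exact mul_le_mul (hwle x hx') (le_trans (hφ x hx') (hφM x hx'))
      (Real.rpow_nonneg (abs_nonneg _) r) (le_trans (hw0 a) (hwle a ⟨le_rfl, hab⟩))
  have hint2 : IntervalIntegrable (fun x => w x * φ x) volume a b :=
    (hw.mul hφc).intervalIntegrable a b
  have hWg : ∫ x in a..b, w x * |g x| ^ r ≤ ∫ x in a..b, w x * φ x := by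
    apply intervalIntegral.integral_mono_on hab hint1 hint2
    intro x hx
    exact mul_le_mul_of_nonneg_left (hφ x hx) (hw0 x)
  have hWφ0 : 0 ≤ ∫ x in a..b, w x * φ x := by
    apply intervalIntegral.integral_nonneg hab
    intro x hx
    exact mul_nonneg (hw0 x) (hφ0 x hx)
  have hW0 : 0 ≤ ∫ x in a..b, w x := by
    apply intervalIntegral.integral_nonneg hab
    intro x _; exact hw0 x
  rcases eq_or_lt_of_le hr with hr1 | hr1
  · -- r = 1
    subst hr1
    simp only [div_one, sub_self, Real.rpow_zero, one_mul, Real.rpow_one]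
    calc ∫ x in a..b, w x * |g x| = ∫ x in a..b, w x * |g x| ^ (1:ℝ) := by
          simp [Real.rpow_one]
    _ ≤ ∫ x in a..b, w x * φ x := hWg
  · -- 1 < r
    have hr1' : (0:ℝ) < r - 1 := by linarith
    set q : ℝ := r / (r - 1) with hq_def
    have hq1 : 1 < q := (one_lt_div hr1').2 (by linarith)
    have hq0 : 0 < q := lt_trans one_pos hq1
    have hpq : Real.HolderConjugate q r := Real.holderConjugate_iff.2 ⟨hq1, by rw [hq_def]; field_simp; ring⟩
    have h1q : 1/q = 1 - 1/r := by
      have := hpq.inv_add_inv_eq_one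
      rw [inv_eq_one_div, inv_eq_one_div] at this
      linarith
    set μ := volume.restrict (Set.Ioc a b) with hμ_def
    haveI : IsFiniteMeasure μ := ⟨by rw [hμ_def, Measure.restrict_apply_univ]; exact hvol⟩
    set F : ℝ → ℝ := fun x => w x ^ (1/q) with hF_def
    set G : ℝ → ℝ := fun x => w x ^ (1/r) * |g x| with hG_def
    have hFm : MemLp F (ENNReal.ofReal q) μ := by
      refine MemLp.of_bound ((hw.rpow_const (fun x => Or.inr (by positivity))).aestronglyMeasurable) (Cw ^ (1/q)) ?_
      filter_upwards [ae_restrict_mem measurableSet_Ioc] with x hx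
      have hx' : x ∈ Set.Icc a b := ⟨hx.1.le, hx.2⟩
      rw [Real.norm_eq_abs, abs_of_nonneg (Real.rpow_nonneg (hw0 x) _)]
      exact Real.rpow_le_rpow (hw0 x) (hwle x hx') (by positivity)
    have hGm : MemLp G (ENNReal.ofReal r) μ := by
      refine MemLp.of_bound
        ((hw.rpow_const (fun x => Or.inr (by positivity))).aestronglyMeasurable.mul
          (continuous_abs.comp_aestronglyMeasurable hg)) (Cw ^ (1/r) * M ^ (1/r)) ?_
      filter_upwards [ae_restrict_mem measurableSet_Ioc] with x hx
      have hx' : x ∈ Set.Icc a b := ⟨hx.1.le, hx.2⟩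
      have hgle : |g x| ≤ M ^ (1/r) := by
        have h1 : |g x| = (|g x| ^ r) ^ (1/r) := by
          rw [← Real.rpow_mul (abs_nonneg _), mul_one_div_cancel hr0.ne', Real.rpow_one]
        rw [h1]
        exact Real.rpow_le_rpow (Real.rpow_nonneg (abs_nonneg _) r)
          (le_trans (hφ x hx') (hφM x hx')) (by positivity)
      rw [Real.norm_eq_abs, abs_of_nonneg (mul_nonneg (Real.rpow_nonneg (hw0 x) _) (abs_nonneg _))]
      exact mul_le_mul (Real.rpow_le_rpow (hw0 x) (hwle x hx') (by positivity)) hgle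
        (abs_nonneg _) (Real.rpow_nonneg (le_trans (hw0 a) (hwle a ⟨le_rfl, hab⟩)) _)
    have hH := MeasureTheory.integral_mul_le_Lp_mul_Lq_of_nonneg hpq
      (Filter.Eventually.of_forall (fun x => Real.rpow_nonneg (hw0 x) _ : ∀ x, 0 ≤ F x))
      (Filter.Eventually.of_forall (fun x => mul_nonneg (Real.rpow_nonneg (hw0 x) _) (abs_nonneg _) : ∀ x, 0 ≤ G x))
      hFm hGm
    have hFG : ∀ x, F x * G x = w x * |g x| := by
      intro x
      simp only [hF_def, hG_def]
      rw [← mul_assoc, ← Real.rpow_add_of_nonneg (hw0 x) (by positivity) (by positivity)]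
      rw [h1q]
      have : 1 - 1/r + 1/r = 1 := by ring
      rw [this, Real.rpow_one]
    have hFq : ∀ x, F x ^ q = w x := by
      intro x
      simp only [hF_def]
      rw [← Real.rpow_mul (hw0 x), one_div, inv_mul_cancel₀ hq0.ne', Real.rpow_one]
    have hGr : ∀ x, G x ^ r = w x * |g x| ^ r := by
      intro x
      simp only [hG_def]
      rw [Real.mul_rpow (Real.rpow_nonneg (hw0 x) _) (abs_nonneg _),
        ← Real.rpow_mul (hw0 x), one_div, inv_mul_cancel₀ hr0.ne', Real.rpow_one]
    rw [intervalIntegral.integral_of_le hab]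
    calc ∫ x in Set.Ioc a b, w x * |g x| = ∫ x, F x * G x ∂μ := by
          rw [hμ_def]; exact (integral_congr_ae (Filter.Eventually.of_forall fun x => (hFG x).symm))
    _ ≤ (∫ x, F x ^ q ∂μ) ^ (1/q) * (∫ x, G x ^ r ∂μ) ^ (1/r) := hH
    _ = (∫ x in a..b, w x) ^ (1 - 1/r) * (∫ x in a..b, w x * |g x| ^ r) ^ (1/r) := by
          rw [h1q]
          congr 1
          · congr 1
            rw [intervalIntegral.integral_of_le hab, hμ_def]
            exact integral_congr_ae (Filter.Eventually.of_forall fun x => hFq x)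
          · congr 1
            rw [intervalIntegral.integral_of_le hab, hμ_def]
            exact integral_congr_ae (Filter.Eventually.of_forall fun x => hGr x)
    _ ≤ (∫ x in a..b, w x) ^ (1 - 1/r) * (∫ x in a..b, w x * φ x) ^ (1/r) := by
          apply mul_le_mul_of_nonneg_left
          · exact Real.rpow_le_rpow (le_trans (by positivity)
              (intervalIntegral.integral_nonneg hab (fun x _ => mul_nonneg (hw0 x) (Real.rpow_nonneg (abs_nonneg _) r)))) hWg (by positivity)
          · exact Real.rpow_nonneg hW0 _
set_option maxHeartbeats 1600000 in
theorem stmt_15 (f f' : ℝ → ℝ) (u v r s : ℝ) (hu : 0 ≤ u) (huv : u < v)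
    (hs : s ∈ Set.Ioc (0:ℝ) 1) (hr : 1 ≤ r)
    (hd : ∀ x ∈ Set.Icc u v, HasDerivAt f (f' x) x)
    (hint : IntervalIntegrable f' volume u v)
    (hsc : SConvexSecond s u v (fun x => |f' x| ^ r)) :
    |(1 / 2) * ((f u + f v) / 2 + f ((u + v) / 2))
        - (1 / (v - u)) * ∫ x in u..v, f x|
      ≤ ((v - u) / (8 * (2 ^ (s - 1) * (s + 1) * (s + 2)) ^ (1 / r))) *
          (1 / 2 : ℝ) ^ (1 - 1 / r) *
          (((3 ^ (s + 2) / 2 ^ (s + 1) - (2 ^ (s + 2) + s - 2 ^ (s + 1) * s + 4) / 2)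
                * |f' u| ^ r
              + (s / 2 + 1 / 2 ^ (s + 1)) * |f' v| ^ r) ^ (1 / r)
            + ((s / 2 + 1 / 2 ^ (s + 1)) * |f' u| ^ r
              + (3 ^ (s + 2) / 2 ^ (s + 1) - (2 ^ (s + 2) + s - 2 ^ (s + 1) * s + 4) / 2)
                * |f' v| ^ r) ^ (1 / r)) := by
  obtain ⟨hs0, hs1⟩ := hs
  have hc : (0:ℝ) < v - u := by linarith
  have hr0 : (0:ℝ) < r := lt_of_lt_of_le one_pos hr
  have hum : u ≤ (u+v)/2 := by linarith
  have hmv : (u+v)/2 ≤ v := by linarith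
  have huv' : u ≤ v := huv.le
  set Gu : ℝ := |f' u| ^ r with hGu_def
  set Gv : ℝ := |f' v| ^ r with hGv_def
  set K0 : ℝ := 2 ^ (s - 1) * (s + 1) * (s + 2) with hK0_def
  set A : ℝ := 3 ^ (s + 2) / 2 ^ (s + 1) - (2 ^ (s + 2) + s - 2 ^ (s + 1) * s + 4) / 2
    with hA_def
  set B : ℝ := s / 2 + 1 / 2 ^ (s + 1) with hB_def
  have hK0 : (0:ℝ) < K0 := by
    rw [hK0_def]
    have h2 : (0:ℝ) < 2 ^ (s-1) := Real.rpow_pos_of_pos two_pos _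
    exact mul_pos (mul_pos h2 (by linarith)) (by linarith)
  have hGu0 : 0 ≤ Gu := Real.rpow_nonneg (abs_nonneg _) r
  have hGv0 : 0 ≤ Gv := Real.rpow_nonneg (abs_nonneg _) r
  -- the convexity majorant
  set φ : ℝ → ℝ := fun x => ((v-x)/(v-u))^s * Gu + ((x-u)/(v-u))^s * Gv with hφ_def
  have hφc : Continuous φ := by
    rw [hφ_def]
    exact (((cont_rpow hs0).comp ((continuous_const.sub continuous_id).div_const _)).mul
      continuous_const).add
      (((cont_rpow hs0).comp ((continuous_id.sub continuous_const).div_const _)).mul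
      continuous_const)
  have hφbound : ∀ x ∈ Set.Icc u v, |f' x| ^ r ≤ φ x := by
    intro x hx
    have ha0 : (0:ℝ) ≤ (v-x)/(v-u) := div_nonneg (by linarith [hx.2]) hc.le
    have ha1 : (v-x)/(v-u) ≤ 1 := (div_le_one hc).2 (by linarith [hx.1])
    have h1a : 1 - (v-x)/(v-u) = (x-u)/(v-u) := by field_simp; ring
    have hcomb : (v-x)/(v-u) * u + (1 - (v-x)/(v-u)) * v = x := by
      rw [h1a]; field_simp; ring
    have h := hsc u ⟨le_rfl, huv'⟩ v ⟨huv', le_rfl⟩ ((v-x)/(v-u)) ⟨ha0, ha1⟩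
    simp only at h
    rw [hcomb, h1a] at h
    exact h
  have hφM : ∀ x ∈ Set.Icc u v, φ x ≤ Gu + Gv := by
    intro x hx
    have ha0 : (0:ℝ) ≤ (v-x)/(v-u) := div_nonneg (by linarith [hx.2]) hc.le
    have ha1 : (v-x)/(v-u) ≤ 1 := (div_le_one hc).2 (by linarith [hx.1])
    have hb0 : (0:ℝ) ≤ (x-u)/(v-u) := div_nonneg (by linarith [hx.1]) hc.le
    have hb1 : (x-u)/(v-u) ≤ 1 := (div_le_one hc).2 (by linarith [hx.2])
    have e1 : ((v-x)/(v-u))^s ≤ 1 := Real.rpow_le_one ha0 ha1 hs0.le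
    have e2 : ((x-u)/(v-u))^s ≤ 1 := Real.rpow_le_one hb0 hb1 hs0.le
    have := add_le_add (mul_le_mul_of_nonneg_right e1 hGu0) (mul_le_mul_of_nonneg_right e2 hGv0)
    simpa using this
  -- measurability of f'
  have hmeas : AEStronglyMeasurable f' (volume.restrict (Set.Ioc u v)) :=
    hint.1.aestronglyMeasurable
  have hm1 : AEStronglyMeasurable f' (volume.restrict (Set.Ioc u ((u+v)/2))) :=
    hmeas.mono_measure (Measure.restrict_mono (Set.Ioc_subset_Ioc le_rfl hmv) le_rfl)
  have hm2 : AEStronglyMeasurable f' (volume.restrict (Set.Ioc ((u+v)/2) v)) :=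
    hmeas.mono_measure (Measure.restrict_mono (Set.Ioc_subset_Ioc hum le_rfl) le_rfl)
  -- integrability
  have hsub1 : Set.uIcc u ((u+v)/2) ⊆ Set.Icc u v := by
    rw [Set.uIcc_of_le hum]; exact Set.Icc_subset_Icc le_rfl hmv
  have hsub2 : Set.uIcc ((u+v)/2) v ⊆ Set.Icc u v := by
    rw [Set.uIcc_of_le hmv]; exact Set.Icc_subset_Icc hum le_rfl
  have hf'1 : IntervalIntegrable f' volume u ((u+v)/2) :=
    hint.mono_set (by rw [Set.uIcc_of_le huv']; exact hsub1)
  have hf'2 : IntervalIntegrable f' volume ((u+v)/2) v :=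
    hint.mono_set (by rw [Set.uIcc_of_le huv']; exact hsub2)
  have hfc : ContinuousOn f (Set.Icc u v) := fun x hx =>
    (hd x hx).continuousAt.continuousWithinAt
  have hfi1 : IntervalIntegrable f volume u ((u+v)/2) :=
    (hfc.mono hsub1).intervalIntegrable
  have hfi2 : IntervalIntegrable f volume ((u+v)/2) v :=
    (hfc.mono hsub2).intervalIntegrable
  -- integration by parts
  have ibp1 : ∫ x in u..((u+v)/2), (x - (3*u+v)/4) * f' x
      = ((u+v)/2 - (3*u+v)/4) * f ((u+v)/2) - (u - (3*u+v)/4) * f u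
        - ∫ x in u..((u+v)/2), 1 * f x :=
    intervalIntegral.integral_mul_deriv_eq_deriv_mul
      (fun x _ => (hasDerivAt_id x).sub_const _)
      (fun x hx => hd x (hsub1 hx))
      (continuous_const.intervalIntegrable _ _) hf'1
  have ibp2 : ∫ x in ((u+v)/2)..v, (x - (u+3*v)/4) * f' x
      = (v - (u+3*v)/4) * f v - ((u+v)/2 - (u+3*v)/4) * f ((u+v)/2)
        - ∫ x in ((u+v)/2)..v, 1 * f x :=
    intervalIntegral.integral_mul_deriv_eq_deriv_mul
      (fun x _ => (hasDerivAt_id x).sub_const _)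
      (fun x hx => hd x (hsub2 hx))
      (continuous_const.intervalIntegrable _ _) hf'2
  have hsplitf : (∫ x in u..((u+v)/2), f x) + ∫ x in ((u+v)/2)..v, f x = ∫ x in u..v, f x :=
    intervalIntegral.integral_add_adjacent_intervals hfi1 hfi2
  have hid : (1 / 2) * ((f u + f v) / 2 + f ((u + v) / 2)) - (1 / (v - u)) * ∫ x in u..v, f x
      = ((∫ x in u..((u+v)/2), (x - (3*u+v)/4) * f' x)
          + ∫ x in ((u+v)/2)..v, (x - (u+3*v)/4) * f' x) / (v-u) := by
    rw [ibp1, ibp2, ← hsplitf]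
    simp only [one_mul]
    field_simp
    ring
  -- abs bounds
  have habs1 : |∫ x in u..((u+v)/2), (x - (3*u+v)/4) * f' x|
      ≤ ∫ x in u..((u+v)/2), |x - (3*u+v)/4| * |f' x| := by
    refine (intervalIntegral.abs_integral_le_integral_abs hum).trans_eq ?_
    apply intervalIntegral.integral_congr
    intro x _
    exact abs_mul _ _
  have habs2 : |∫ x in ((u+v)/2)..v, (x - (u+3*v)/4) * f' x|
      ≤ ∫ x in ((u+v)/2)..v, |x - (u+3*v)/4| * |f' x| := by
    refine (intervalIntegral.abs_integral_le_integral_abs hmv).trans_eq ?_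
    apply intervalIntegral.integral_congr
    intro x _
    exact abs_mul _ _
  -- Hölder bounds
  have hb1 := half_bound (g := f') (p := (3*u+v)/4) hr hum hm1 φ hφc
    (fun x hx => hφbound x (⟨hx.1, le_trans hx.2 hmv⟩))
    (fun x hx => hφM x (⟨hx.1, le_trans hx.2 hmv⟩))
  have hb2 := half_bound (g := f') (p := (u+3*v)/4) hr hmv hm2 φ hφc
    (fun x hx => hφbound x (⟨le_trans hum hx.1, hx.2⟩))
    (fun x hx => hφM x (⟨le_trans hum hx.1, hx.2⟩))
  -- exact weight integrals
  have hW1 : ∫ x in u..((u+v)/2), |x - (3*u+v)/4| = (v-u)^2/16 := by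
    rw [W_eq (by linarith) (by linarith)]; ring
  have hW2 : ∫ x in ((u+v)/2)..v, |x - (u+3*v)/4| = (v-u)^2/16 := by
    rw [W_eq (by linarith) (by linarith)]; ring
  -- nonvanishing facts for field_simp
  have hcs : (0:ℝ) < (v-u)^s := Real.rpow_pos_of_pos hc s
  have h2s1 : (0:ℝ) < 2^(s+1) := Real.rpow_pos_of_pos two_pos _
  have h2sm : (0:ℝ) < 2^(s-1) := Real.rpow_pos_of_pos two_pos _
  have hs1' : (0:ℝ) < s + 1 := by linarith
  have hs2' : (0:ℝ) < s + 2 := by linarith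
  -- J integrals
  have hiA : ∀ a b : ℝ, IntervalIntegrable (fun x => |x - (3*u+v)/4| * (v-x)^s) volume a b :=
    fun a b => (((continuous_id.sub continuous_const).abs).mul
      ((cont_rpow hs0).comp (continuous_const.sub continuous_id))).intervalIntegrable a b
  have hiB : ∀ a b : ℝ, IntervalIntegrable (fun x => |x - (3*u+v)/4| * (x-u)^s) volume a b :=
    fun a b => (((continuous_id.sub continuous_const).abs).mul
      ((cont_rpow hs0).comp (continuous_id.sub continuous_const))).intervalIntegrable a b
  have hiA2 : ∀ a b : ℝ, IntervalIntegrable (fun x => |x - (u+3*v)/4| * (v-x)^s) volume a b :=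
    fun a b => (((continuous_id.sub continuous_const).abs).mul
      ((cont_rpow hs0).comp (continuous_const.sub continuous_id))).intervalIntegrable a b
  have hiB2 : ∀ a b : ℝ, IntervalIntegrable (fun x => |x - (u+3*v)/4| * (x-u)^s) volume a b :=
    fun a b => (((continuous_id.sub continuous_const).abs).mul
      ((cont_rpow hs0).comp (continuous_id.sub continuous_const))).intervalIntegrable a b
  have hJ1 : ∫ x in u..((u+v)/2), |x - (3*u+v)/4| * φ x
      = (v-u)^2 * ((A * Gu + B * Gv)/(8*K0)) := by
    have hsp : ∫ x in u..((u+v)/2), |x - (3*u+v)/4| * φ x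
        = (Gu/(v-u)^s) * (∫ x in u..((u+v)/2), |x - (3*u+v)/4| * (v-x)^s)
          + (Gv/(v-u)^s) * (∫ x in u..((u+v)/2), |x - (3*u+v)/4| * (x-u)^s) := by
      rw [show (Gu/(v-u)^s) * (∫ x in u..((u+v)/2), |x - (3*u+v)/4| * (v-x)^s)
            + (Gv/(v-u)^s) * (∫ x in u..((u+v)/2), |x - (3*u+v)/4| * (x-u)^s)
          = (∫ x in u..((u+v)/2), Gu/(v-u)^s * (|x - (3*u+v)/4| * (v-x)^s))
            + ∫ x in u..((u+v)/2), Gv/(v-u)^s * (|x - (3*u+v)/4| * (x-u)^s) from by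
          rw [intervalIntegral.integral_const_mul, intervalIntegral.integral_const_mul],
        ← intervalIntegral.integral_add ((hiA u ((u+v)/2)).const_mul (Gu/(v-u)^s))
          ((hiB u ((u+v)/2)).const_mul (Gv/(v-u)^s))]
      apply intervalIntegral.integral_congr
      intro x hx
      rw [Set.uIcc_of_le hum] at hx
      have hvx : (0:ℝ) ≤ v - x := by linarith [hx.2]
      have hxu : (0:ℝ) ≤ x - u := by linarith [hx.1]
      show |x - (3*u+v)/4| * φ x = _
      rw [hφ_def]
      simp only
      rw [Real.div_rpow hvx hc.le, Real.div_rpow hxu hc.le]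
      field_simp
    rw [hsp, Ca1_eq huv hs0, Cb1_eq huv hs0, hA_def, hB_def, hK0_def]
    field_simp
  have hrefl1 : ∫ x in ((u+v)/2)..v, |x - (u+3*v)/4| * (v-x)^s
      = ∫ x in u..((u+v)/2), |x - (3*u+v)/4| * (x-u)^s := by
    have h := intervalIntegral.integral_comp_sub_left (a := u) (b := (u+v)/2)
      (fun y => |y - (u+3*v)/4| * (v-y)^s) (u+v)
    rw [show u+v - (u+v)/2 = (u+v)/2 from by ring, show u+v - u = v from by ring] at h
    rw [← h]
    apply intervalIntegral.integral_congr
    intro x _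
    show |u+v-x - (u+3*v)/4| * (v - (u+v-x))^s = |x - (3*u+v)/4| * (x-u)^s
    rw [show u+v-x - (u+3*v)/4 = -(x - (3*u+v)/4) from by ring, abs_neg,
      show v - (u+v-x) = x - u from by ring]
  have hrefl2 : ∫ x in ((u+v)/2)..v, |x - (u+3*v)/4| * (x-u)^s
      = ∫ x in u..((u+v)/2), |x - (3*u+v)/4| * (v-x)^s := by
    have h := intervalIntegral.integral_comp_sub_left (a := u) (b := (u+v)/2)
      (fun y => |y - (u+3*v)/4| * (y-u)^s) (u+v)
    rw [show u+v - (u+v)/2 = (u+v)/2 from by ring, show u+v - u = v from by ring] at h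
    rw [← h]
    apply intervalIntegral.integral_congr
    intro x _
    show |u+v-x - (u+3*v)/4| * (u+v-x-u)^s = |x - (3*u+v)/4| * (v-x)^s
    rw [show u+v-x - (u+3*v)/4 = -(x - (3*u+v)/4) from by ring, abs_neg,
      show u+v-x-u = v - x from by ring]
  have hJ2 : ∫ x in ((u+v)/2)..v, |x - (u+3*v)/4| * φ x
      = (v-u)^2 * ((B * Gu + A * Gv)/(8*K0)) := by
    have hsp : ∫ x in ((u+v)/2)..v, |x - (u+3*v)/4| * φ x
        = (Gu/(v-u)^s) * (∫ x in ((u+v)/2)..v, |x - (u+3*v)/4| * (v-x)^s)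
          + (Gv/(v-u)^s) * (∫ x in ((u+v)/2)..v, |x - (u+3*v)/4| * (x-u)^s) := by
      rw [show (Gu/(v-u)^s) * (∫ x in ((u+v)/2)..v, |x - (u+3*v)/4| * (v-x)^s)
            + (Gv/(v-u)^s) * (∫ x in ((u+v)/2)..v, |x - (u+3*v)/4| * (x-u)^s)
          = (∫ x in ((u+v)/2)..v, Gu/(v-u)^s * (|x - (u+3*v)/4| * (v-x)^s))
            + ∫ x in ((u+v)/2)..v, Gv/(v-u)^s * (|x - (u+3*v)/4| * (x-u)^s) from by
          rw [intervalIntegral.integral_const_mul, intervalIntegral.integral_const_mul],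
        ← intervalIntegral.integral_add ((hiA2 ((u+v)/2) v).const_mul (Gu/(v-u)^s))
          ((hiB2 ((u+v)/2) v).const_mul (Gv/(v-u)^s))]
      apply intervalIntegral.integral_congr
      intro x hx
      rw [Set.uIcc_of_le hmv] at hx
      have hvx : (0:ℝ) ≤ v - x := by linarith [hx.2]
      have hxu : (0:ℝ) ≤ x - u := by linarith [hx.1]
      show |x - (u+3*v)/4| * φ x = _
      rw [hφ_def]
      simp only
      rw [Real.div_rpow hvx hc.le, Real.div_rpow hxu hc.le]
      field_simp
    rw [hsp, hrefl1, hrefl2, Ca1_eq huv hs0, Cb1_eq huv hs0, hA_def, hB_def, hK0_def]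
    field_simp
  -- nonnegativity of the bracket combinations
  have hφ0 : ∀ x ∈ Set.Icc u v, 0 ≤ φ x := fun x hx =>
    le_trans (Real.rpow_nonneg (abs_nonneg _) r) (hφbound x hx)
  have hB1nn : 0 ≤ A * Gu + B * Gv := by
    have h0 : 0 ≤ ∫ x in u..((u+v)/2), |x - (3*u+v)/4| * φ x :=
      intervalIntegral.integral_nonneg hum (fun x hx =>
        mul_nonneg (abs_nonneg _) (hφ0 x ⟨hx.1, le_trans hx.2 hmv⟩))
    rw [hJ1] at h0
    by_contra hneg
    push_neg at hneg
    have hlt : (A * Gu + B * Gv)/(8*K0) < 0 := div_neg_of_neg_of_pos hneg (by linarith)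
    nlinarith [pow_pos hc 2]
  have hB2nn : 0 ≤ B * Gu + A * Gv := by
    have h0 : 0 ≤ ∫ x in ((u+v)/2)..v, |x - (u+3*v)/4| * φ x :=
      intervalIntegral.integral_nonneg hmv (fun x hx =>
        mul_nonneg (abs_nonneg _) (hφ0 x ⟨le_trans hum hx.1, hx.2⟩))
    rw [hJ2] at h0
    by_contra hneg
    push_neg at hneg
    have hlt : (B * Gu + A * Gv)/(8*K0) < 0 := div_neg_of_neg_of_pos hneg (by linarith)
    nlinarith [pow_pos hc 2]
  -- combine
  have hT1 : |∫ x in u..((u+v)/2), (x - (3*u+v)/4) * f' x|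
      ≤ ((v-u)^2/16)^(1-1/r) * ((v-u)^2 * ((A * Gu + B * Gv)/(8*K0)))^(1/r) := by
    refine habs1.trans (hb1.trans_eq ?_)
    rw [hW1, hJ1]
  have hT2 : |∫ x in ((u+v)/2)..v, (x - (u+3*v)/4) * f' x|
      ≤ ((v-u)^2/16)^(1-1/r) * ((v-u)^2 * ((B * Gu + A * Gv)/(8*K0)))^(1/r) := by
    refine habs2.trans (hb2.trans_eq ?_)
    rw [hW2, hJ2]
  -- rpow algebra
  have hfin : ∀ D : ℝ, 0 ≤ D → ((v-u)^2/16)^(1-1/r) * ((v-u)^2 * (D/(8*K0)))^(1/r)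
      = (v-u)^2 * ((1/2:ℝ)^(1-1/r) * (D^(1/r)/(8*K0^(1/r)))) := by
    intro D hD
    have hc2 : (0:ℝ) < (v-u)^2 := by positivity
    have hPQ : ((v-u)^2)^(1-1/r) * ((v-u)^2)^(1/r) = (v-u)^2 := by
      rw [← Real.rpow_add hc2, show 1-1/r + (1/r) = 1 from by ring, Real.rpow_one]
    have hEF : (8:ℝ)^(1-1/r) * (8:ℝ)^(1/r) = 8 := by
      rw [← Real.rpow_add (by norm_num : (0:ℝ) < 8), show 1-1/r + (1/r) = 1 from by ring,
        Real.rpow_one]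
    have hE : (0:ℝ) < (8:ℝ)^(1-1/r) := Real.rpow_pos_of_pos (by norm_num) _
    have hF : (0:ℝ) < (8:ℝ)^(1/r) := Real.rpow_pos_of_pos (by norm_num) _
    have hG : (0:ℝ) < K0^(1/r) := Real.rpow_pos_of_pos hK0 _
    rw [show (v-u)^2/16 = (v-u)^2 * (1/16:ℝ) from by ring,
      Real.mul_rpow hc2.le (by norm_num),
      Real.mul_rpow hc2.le (div_nonneg hD (by linarith)),
      Real.div_rpow hD (by linarith : (0:ℝ) ≤ 8*K0),
      Real.mul_rpow (by norm_num : (0:ℝ) ≤ 8) hK0.le,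
      show (1:ℝ)/16 = (1/2)*(1/8) from by norm_num,
      Real.mul_rpow (by norm_num) (by norm_num),
      show (1:ℝ)/8 = 1/8 from rfl,
      Real.div_rpow (by norm_num : (0:ℝ) ≤ 1) (by norm_num : (0:ℝ) ≤ 8),
      Real.one_rpow]
    generalize hP : ((v-u)^2 : ℝ)^(1-1/r) = P at hPQ ⊢
    generalize hQ : ((v-u)^2 : ℝ)^(1/r) = Q at hPQ ⊢
    generalize hE' : ((8:ℝ))^(1-1/r) = E at hEF hE ⊢
    generalize hF' : ((8:ℝ))^(1/r) = F at hEF hF ⊢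
    generalize hG' : (K0:ℝ)^(1/r) = G at hG ⊢
    rw [← hPQ, ← hEF]
    field_simp
  -- final chain
  rw [hid, abs_div, abs_of_pos hc]
  have hstep : |(∫ x in u..((u+v)/2), (x - (3*u+v)/4) * f' x)
      + ∫ x in ((u+v)/2)..v, (x - (u+3*v)/4) * f' x|
      ≤ ((v-u)^2/16)^(1-1/r) * ((v-u)^2 * ((A * Gu + B * Gv)/(8*K0)))^(1/r)
        + ((v-u)^2/16)^(1-1/r) * ((v-u)^2 * ((B * Gu + A * Gv)/(8*K0)))^(1/r) :=
    (abs_add_le _ _).trans (add_le_add hT1 hT2)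
  refine ((div_le_div_iff_of_pos_right hc).2 hstep).trans_eq ?_
  rw [hfin _ hB1nn, hfin _ hB2nn]
  have hG : (0:ℝ) < K0^(1/r) := Real.rpow_pos_of_pos hK0 _
  field_simp
end
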